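/- Let X be a quasi-metrizable topological space whose set X' of non-isolated points is compact and nonempty, with compatible quasi-metric d. Define ρ(x,y) = 0 if x=y and ρ(x,y) = d(x,y) + max{d(X',x), d(X',y)} if x≠y, where d(X',x) = inf{d(t,x): t∈X'}. Then ρ is a quasi-metric on X that induces the same (forward) topology as d. -/
import Mathlib


open Filter Topology Set

structure IsQuasiMetric {X : Type*} (d : X → X → ℝ) : Prop where
  nonneg : ∀ x y, 0 ≤ d x y
  refl : ∀ x, d x x = 0
  eq_of_both_zero : ∀ x y, d x y = 0 → d y x = 0 → x = y
  triangle : ∀ x y z, d x y ≤ d x z + d z y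

/-- The forward topology generated by forward balls `B⁺(x,ε) = {y | d x y < ε}`. -/
def forwardTopology {X : Type*} (d : X → X → ℝ) : TopologicalSpace X :=
  TopologicalSpace.generateFrom {S | ∃ x : X, ∃ ε : ℝ, 0 < ε ∧ S = {y | d x y < ε}}

/-- `s` forward converges to `x`: `d x (s n) → 0`. -/
def ForwardConv {X : Type*} (d : X → X → ℝ) (s : ℕ → X) (x : X) : Prop :=
  ∀ ε > (0:ℝ), ∃ N : ℕ, ∀ n ≥ N, d x (s n) < ε

/-- `s` backward converges to `x`: `d (s n) x → 0`. -/
def BackwardConv {X : Type*} (d : X → X → ℝ) (s : ℕ → X) (x : X) : Prop :=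
  ∀ ε > (0:ℝ), ∃ N : ℕ, ∀ n ≥ N, d (s n) x < ε

/-- `x` is a cluster point of `s`: some subsequence forward converges to `x`. -/
def IsClusterPointOf {X : Type*} (d : X → X → ℝ) (s : ℕ → X) (x : X) : Prop :=
  ∃ φ : ℕ → ℕ, StrictMono φ ∧ ForwardConv d (s ∘ φ) x

def LeftKCauchy {X : Type*} (d : X → X → ℝ) (s : ℕ → X) : Prop :=
  ∀ ε > (0:ℝ), ∃ n₀ : ℕ, ∀ k n : ℕ, n₀ ≤ k → k ≤ n → d (s k) (s n) < ε

/-- `s` is forward parallel to `t`. -/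
def ForwardParallel {X : Type*} (d : X → X → ℝ) (s t : ℕ → X) : Prop :=
  ∀ ε > (0:ℝ), ∃ N : ℕ, ∀ n ≥ N, d (s n) (t n) < ε

/-- Forward continuity for real-valued functions (ε-δ form). -/
def ForwardContinuous {X : Type*} (d : X → X → ℝ) (f : X → ℝ) : Prop :=
  ∀ x₀ : X, ∀ ε > (0:ℝ), ∃ δ > (0:ℝ), ∀ y, d x₀ y < δ → |f x₀ - f y| < ε

/-- Uniform continuity for real-valued functions. -/
def UniformlyCont {X : Type*} (d : X → X → ℝ) (f : X → ℝ) : Prop :=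
  ∀ ε > (0:ℝ), ∃ δ > (0:ℝ), ∀ x y, d x y < δ → |f x - f y| < ε

/-- `(X,d)` is a UC quasi-metric space. -/
def IsUC {X : Type*} (d : X → X → ℝ) : Prop :=
  ∀ f : X → ℝ, ForwardContinuous d f → UniformlyCont d f

/-- Distance between two sets: `inf {d a b | a ∈ A, b ∈ B}`. -/
noncomputable def setDist {X : Type*} (d : X → X → ℝ) (A B : Set X) : ℝ :=
  sInf {r : ℝ | ∃ a ∈ A, ∃ b ∈ B, d a b = r}


section Aux

variable {X : Type*}

/-- A set satisfying the "contains a forward ball around each point" criterion is open in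
the forward topology. -/
lemma aux_isOpen_forward (d : X → X → ℝ) (hrefl : ∀ x, d x x = 0)
    (U : Set X) (h : ∀ x ∈ U, ∃ ε > (0:ℝ), ∀ y, d x y < ε → y ∈ U) :
    IsOpen[forwardTopology d] U := by
  letI := forwardTopology d
  choose ε hε hsub using h
  have hU : U = ⋃ x : U, {y | d x.1 y < ε x.1 x.2} := by
    ext y
    constructor
    · intro hy
      exact Set.mem_iUnion.2 ⟨⟨y, hy⟩, by simpa [hrefl y] using hε y hy⟩
    · intro hy
      obtain ⟨x, hx⟩ := Set.mem_iUnion.1 hy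
      exact hsub x.1 x.2 y hx
  rw [hU]
  exact isOpen_iUnion fun x =>
    TopologicalSpace.isOpen_generateFrom_of_mem ⟨x.1, ε x.1 x.2, hε x.1 x.2, rfl⟩

/-- Conversely, any open set in the forward topology contains a forward ball around
each of its points (uses the triangle inequality). -/
lemma aux_ball_of_isOpen (d : X → X → ℝ) (htri : ∀ x y z, d x y ≤ d x z + d z y)
    (U : Set X) (hU : IsOpen[forwardTopology d] U) :
    ∀ x ∈ U, ∃ ε > (0:ℝ), ∀ y, d x y < ε → y ∈ U := by
  have hU' : TopologicalSpace.GenerateOpen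
      {S | ∃ x : X, ∃ ε : ℝ, 0 < ε ∧ S = {y | d x y < ε}} U := hU
  clear hU
  induction hU' with
  | basic S hS =>
    obtain ⟨z, ε, hε, rfl⟩ := hS
    intro x hx
    refine ⟨ε - d z x, by simpa using hx, fun y hy => ?_⟩
    have := htri z y x
    simp only [Set.mem_setOf_eq] at hx ⊢
    linarith
  | univ => exact fun x _ => ⟨1, one_pos, fun y _ => trivial⟩
  | inter S₁ S₂ _ _ ih₁ ih₂ =>
    intro x hx
    obtain ⟨ε₁, hε₁, h₁⟩ := ih₁ x hx.1
    obtain ⟨ε₂, hε₂, h₂⟩ := ih₂ x hx.2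
    exact ⟨min ε₁ ε₂, lt_min hε₁ hε₂, fun y hy =>
      ⟨h₁ y (lt_of_lt_of_le hy (min_le_left _ _)), h₂ y (lt_of_lt_of_le hy (min_le_right _ _))⟩⟩
  | sUnion S _ ih =>
    intro x hx
    obtain ⟨s, hs, hxs⟩ := hx
    obtain ⟨ε, hε, h⟩ := ih s hs x hxs
    exact ⟨ε, hε, fun y hy => ⟨s, hs, h y hy⟩⟩

end Aux

/-- the Beer-type quasi-metric `ρ` built from a compatible quasi-metric `d`
and the compact set of non-isolated points is a quasi-metric inducing the same topology. -/
theorem beer_quasiMetric {X : Type*} [DecidableEq X] [T : TopologicalSpace X] (d : X → X → ℝ)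
    (hd : IsQuasiMetric d) (hcompat : forwardTopology d = T)
    (X' : Set X) (hX' : X' = {x : X | ¬ IsOpen ({x} : Set X)})
    (hcpt : IsCompact X') (hne : X'.Nonempty)
    (ρ : X → X → ℝ)
    (hρ : ∀ x y : X, ρ x y = if x = y then 0 else
      d x y + max (sInf ((fun t => d t x) '' X')) (sInf ((fun t => d t y) '' X'))) :
    IsQuasiMetric ρ ∧ forwardTopology ρ = forwardTopology d := by
  set D : X → ℝ := fun x => sInf ((fun t => d t x) '' X') with hDdef
  have hbdd : ∀ x, BddBelow ((fun t => d t x) '' X') := fun x =>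
    ⟨0, by rintro r ⟨t, -, rfl⟩; exact hd.nonneg t x⟩
  have hne' : ∀ x : X, ((fun t => d t x) '' X').Nonempty := fun x => hne.image _
  have hD0 : ∀ x, 0 ≤ D x := fun x =>
    le_csInf (hne' x) (by rintro r ⟨t, -, rfl⟩; exact hd.nonneg t x)
  have hDle : ∀ t ∈ X', ∀ x, D x ≤ d t x := fun t ht x =>
    csInf_le (hbdd x) ⟨t, ht, rfl⟩
  have hDlip : ∀ x y, D y ≤ D x + d x y := by
    intro x y
    have : D y - d x y ≤ D x := by
      refine le_csInf (hne' x) ?_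
      rintro r ⟨t, ht, rfl⟩
      have h1 : D y ≤ d t y := hDle t ht y
      have h2 : d t y ≤ d t x + d x y := hd.triangle t y x
      linarith
    linarith
  have hdρ : ∀ x y, d x y ≤ ρ x y := by
    intro x y
    rw [hρ]
    by_cases h : x = y
    · simp [h, hd.refl y]
    · simp only [h, if_false]
      have := (hD0 x).trans (le_max_left (D x) (D y))
      linarith
  have hρ0 : ∀ x y, 0 ≤ ρ x y := fun x y => (hd.nonneg x y).trans (hdρ x y)
  have hρrefl : ∀ x, ρ x x = 0 := fun x => by simp [hρ]
  -- the quasi-metric axioms for ρ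
  have hq : IsQuasiMetric ρ := by
    refine ⟨hρ0, hρrefl, ?_, ?_⟩
    · intro x y h1 h2
      have hx : d x y = 0 := le_antisymm (h1 ▸ hdρ x y) (hd.nonneg x y)
      have hy : d y x = 0 := le_antisymm (h2 ▸ hdρ y x) (hd.nonneg y x)
      exact hd.eq_of_both_zero x y hx hy
    · intro x y z
      by_cases hxy : x = y
      · rw [hxy, hρrefl]; exact add_nonneg (hρ0 y z) (hρ0 z y)
      by_cases hxz : x = z
      · rw [hxz, hρrefl, zero_add]
      by_cases hzy : z = y
      · rw [hzy, hρrefl, add_zero]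
      rw [hρ x y, hρ x z, hρ z y]
      simp only [hxy, hxz, hzy, if_false]
      have h1 : d x y ≤ d x z + d z y := hd.triangle x y z
      have h2 : max (D x) (D y) ≤ max (D x) (D z) + max (D z) (D y) := by
        refine max_le ?_ ?_
        · have := (hD0 z).trans (le_max_left (D z) (D y))
          have := le_max_left (D x) (D z)
          linarith
        · have := (hD0 x).trans (le_max_left (D x) (D z))
          have := le_max_right (D z) (D y)
          linarith
      linarith
  refine ⟨hq, ?_⟩
  -- key: every ρ-ball around y contains a d-ball around y
  have hkey : ∀ y : X, ∀ η > (0:ℝ), ∃ δ > (0:ℝ), ∀ z, d y z < δ → ρ y z < η := by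
    intro y η hη
    by_cases hy : y ∈ X'
    · -- y non-isolated: D y = 0
      have hDy : D y = 0 := le_antisymm (by simpa [hd.refl y] using hDle y hy y) (hD0 y)
      refine ⟨η / 2, by linarith, fun z hz => ?_⟩
      by_cases hyz : y = z
      · rw [hyz, hρrefl]; exact hη
      · rw [hρ y z]
        simp only [hyz, if_false]
        have h1 : D z ≤ D y + d y z := hDlip y z
        have h2 : max (D y) (D z) ≤ d y z := by
          refine max_le (by rw [hDy]; exact hd.nonneg y z) (by linarith)
        linarith
    · -- y isolated: the singleton {y} is open in forwardTopology d
      rw [hX'] at hy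
      have hyo : IsOpen[forwardTopology d] ({y} : Set X) := by
        rw [hcompat]; exact not_not.1 hy
      obtain ⟨δ, hδ, h⟩ := aux_ball_of_isOpen d hd.triangle _ hyo y rfl
      refine ⟨δ, hδ, fun z hz => ?_⟩
      have hzy : z = y := h z hz
      rw [hzy, hρrefl y]
      exact hη
  -- now prove topology equality
  refine le_antisymm ?_ ?_
  · -- forwardTopology ρ ≤ forwardTopology d : d-balls are ρ-open
    refine TopologicalSpace.le_generateFrom_iff_subset_isOpen.2 ?_
    rintro S ⟨x, ε, hε, rfl⟩
    refine aux_isOpen_forward ρ hρrefl _ ?_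
    intro y hy
    refine ⟨ε - d x y, by simpa using hy, fun z hz => ?_⟩
    have h1 : d y z ≤ ρ y z := hdρ y z
    have h2 : d x z ≤ d x y + d y z := hd.triangle x z y
    simp only [Set.mem_setOf_eq] at hy ⊢
    linarith
  · -- forwardTopology d ≤ forwardTopology ρ : ρ-balls are d-open
    refine TopologicalSpace.le_generateFrom_iff_subset_isOpen.2 ?_
    rintro S ⟨x, ε, hε, rfl⟩
    refine aux_isOpen_forward d hd.refl _ ?_
    intro y hy
    simp only [Set.mem_setOf_eq] at hy
    obtain ⟨δ, hδ, h⟩ := hkey y (ε - ρ x y) (by linarith)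
    refine ⟨δ, hδ, fun z hz => ?_⟩
    have h1 : ρ x z ≤ ρ x y + ρ y z := hq.triangle x z y
    have h2 : ρ y z < ε - ρ x y := h z hz
    simp only [Set.mem_setOf_eq]
    linarith
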